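/- (Convergence of α-NormEC, non-private setting.) Consider the α-NormEC iterates for differentiable functions f₁, …, f_n : ℝ^d → ℝ, where each f_i has L_i-Lipschitz gradient, and f := (1/n)∑_{i=1}^n f_i has L-Lipschitz gradient and satisfies f(x) ≥ f_inf for all x ∈ ℝ^d, where f_inf ∈ ℝ. Let L_max = max_{1≤i≤n} L_i and R = max_{1≤i≤n} ‖∇f_i(x⁰) − g_i⁰‖. Assume 0 < β ≤ α (which implies β/(α + R) < 1) and 0 < γ ≤ (β·R/(α + R))·(1/L_max). Then for every K ∈ ℕ: min_{0≤k≤K} ‖∇f(x^k)‖ ≤ (f(x⁰) − f_inf)/(γ(K + 1)) + 2R + (L/2)·γ. -/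

import Mathlib

open scoped Classical

section Aux

variable {E : Type*} [NormedAddCommGroup E] [InnerProductSpace ℝ E] [CompleteSpace E]

theorem my_descent (f : E → ℝ) (hdiff : Differentiable ℝ f) (L : ℝ) (hL : 0 ≤ L)
    (hlip : ∀ x y, ‖gradient f x - gradient f y‖ ≤ L * ‖x - y‖) (x y : E) :
    f y ≤ f x + inner ℝ (gradient f x) (y - x) + L / 2 * ‖y - x‖ ^ 2 := by
  set v := y - x with hv
  have hinner : ∀ p w, (fderiv ℝ f p) w = (inner ℝ (gradient f p) w : ℝ) := by
    intro p w
    unfold gradient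
    rw [← InnerProductSpace.toDual_apply_apply, (InnerProductSpace.toDual ℝ E).apply_symm_apply]
  have hline : ∀ t : ℝ, HasDerivAt (fun t : ℝ => x + t • v) v t := by
    intro t
    simpa using ((hasDerivAt_id t).smul_const v).const_add x
  have hphi : ∀ t : ℝ, HasDerivAt (fun t : ℝ => f (x + t • v))
      (inner ℝ (gradient f (x + t • v)) v : ℝ) t := by
    intro t
    have := (hdiff (x + t • v)).hasFDerivAt.comp_hasDerivAt t (hline t)
    rw [← hinner]
    exact this
  have hcont : Continuous fun t : ℝ => (inner ℝ (gradient f (x + t • v)) v : ℝ) := by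
    have hgc : Continuous (gradient f) := by
      apply (LipschitzWith.of_dist_le_mul (K := ⟨L, hL⟩) ?_).continuous
      intro p q
      exact (by simpa [dist_eq_norm] using hlip p q : dist (gradient f p) (gradient f q) ≤ L * dist p q)
    exact (Continuous.inner (hgc.comp (continuous_const.add (continuous_id.smul continuous_const))) continuous_const)
  have hint : IntervalIntegrable (fun t : ℝ => (inner ℝ (gradient f (x + t • v)) v : ℝ))
      MeasureTheory.volume 0 1 := hcont.intervalIntegrable 0 1
  have heq : ∫ t in (0:ℝ)..1, (inner ℝ (gradient f (x + t • v)) v : ℝ) = f y - f x := by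
    rw [intervalIntegral.integral_eq_sub_of_hasDerivAt (fun t _ => hphi t) hint]
    simp [hv]
  have hbound : ∀ t ∈ Set.Icc (0:ℝ) 1,
      (inner ℝ (gradient f (x + t • v)) v : ℝ) ≤ inner ℝ (gradient f x) v + L * t * ‖v‖ ^ 2 := by
    intro t ht
    have h1 : (inner ℝ (gradient f (x + t • v)) v : ℝ) - inner ℝ (gradient f x) v
        = inner ℝ (gradient f (x + t • v) - gradient f x) v := by
      rw [inner_sub_left]
    have h2 : (inner ℝ (gradient f (x + t • v) - gradient f x) v : ℝ)
        ≤ ‖gradient f (x + t • v) - gradient f x‖ * ‖v‖ := real_inner_le_norm _ _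
    have h3 : ‖gradient f (x + t • v) - gradient f x‖ ≤ L * (t * ‖v‖) := by
      have := hlip (x + t • v) x
      simpa [norm_smul, abs_of_nonneg ht.1] using this
    nlinarith [norm_nonneg v, norm_nonneg (gradient f (x + t • v) - gradient f x)]
  have hintle : ∫ t in (0:ℝ)..1, (inner ℝ (gradient f (x + t • v)) v : ℝ)
      ≤ ∫ t in (0:ℝ)..1, (inner ℝ (gradient f x) v + L * t * ‖v‖ ^ 2 : ℝ) := by
    apply intervalIntegral.integral_mono_on (by norm_num) hint
    · exact (Continuous.intervalIntegrable (by continuity) 0 1)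
    · exact hbound
  have hrhs : ∫ t in (0:ℝ)..1, (inner ℝ (gradient f x) v + L * t * ‖v‖ ^ 2 : ℝ)
      = inner ℝ (gradient f x) v + L / 2 * ‖v‖ ^ 2 := by
    rw [intervalIntegral.integral_add (Continuous.intervalIntegrable continuous_const 0 1)
      (Continuous.intervalIntegrable (by fun_prop) 0 1)]
    have h1 : (fun t : ℝ => L * t * ‖v‖ ^ 2) = fun t : ℝ => (L * ‖v‖ ^ 2) * t := by
      funext t; ring
    rw [h1, intervalIntegral.integral_const_mul, integral_id]
    simp
    ring
  rw [heq] at hintle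
  rw [hrhs] at hintle
  linarith

theorem grad_of_avg (n : ℕ) (fi : Fin n → E → ℝ) (f : E → ℝ)
    (hf : ∀ y, f y = (n : ℝ)⁻¹ * ∑ i, fi i y) (hdiffi : ∀ i, Differentiable ℝ (fi i)) (p : E) :
    gradient f p = (n : ℝ)⁻¹ • ∑ i, gradient (fi i) p := by
  have hgi : ∀ i, HasFDerivAt (fi i) ((InnerProductSpace.toDual ℝ E) (gradient (fi i) p)) p :=
    fun i => hasGradientAt_iff_hasFDerivAt.mp (hdiffi i p).hasGradientAt
  have h1 := HasFDerivAt.sum (fun i (_ : i ∈ Finset.univ) => hgi i)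
  have h2 := h1.const_smul ((n : ℝ)⁻¹)
  have h3 : HasFDerivAt f
      ((n : ℝ)⁻¹ • ∑ i, (InnerProductSpace.toDual ℝ E) (gradient (fi i) p)) p := by
    have hfe : f = fun y => (n : ℝ)⁻¹ • ∑ i, fi i y := by
      funext y; rw [hf y]; simp [smul_eq_mul]
    rw [hfe]; exact h2.congr_of_eventuallyEq (Filter.Eventually.of_forall fun y => by simp [Finset.sum_apply])
  have h4 : HasGradientAt f ((n : ℝ)⁻¹ • ∑ i, gradient (fi i) p) p := by
    rw [hasGradientAt_iff_hasFDerivAt, map_smul, map_sum]; exact h3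
  exact h4.gradient

theorem contraction_scalar (α β R t : ℝ) (hβ : 0 < β) (hβα : β ≤ α) (ht : 0 ≤ t)
    (htR : t ≤ R) : (1 - β * (α + t)⁻¹) * t ≤ R - β * R / (α + R) := by
  have hα : 0 < α := lt_of_lt_of_le hβ hβα
  have h1 : 0 < α + t := by linarith
  have h2 : 0 < α + R := by linarith
  have hu : (α + t) * (α + t)⁻¹ = 1 := mul_inv_cancel₀ h1.ne'
  have hw : (α + R) * (α + R)⁻¹ = 1 := mul_inv_cancel₀ h2.ne'
  have hinv : (α + R)⁻¹ ≤ (α + t)⁻¹ := by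
    apply inv_anti₀ h1; linarith
  have h3 : (1 - β * (α + t)⁻¹) * t ≤ (1 - β * (α + R)⁻¹) * t := by
    apply mul_le_mul_of_nonneg_right _ ht
    have := mul_le_mul_of_nonneg_left hinv hβ.le
    linarith
  have hinv0 : (0:ℝ) ≤ (α + R)⁻¹ := inv_nonneg.mpr h2.le
  have h4 : 0 ≤ 1 - β * (α + R)⁻¹ := by nlinarith
  have h5 : (1 - β * (α + R)⁻¹) * t ≤ (1 - β * (α + R)⁻¹) * R :=
    mul_le_mul_of_nonneg_left htR h4
  have h6 : R - β * R / (α + R) = (1 - β * (α + R)⁻¹) * R := by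
    rw [div_eq_mul_inv]; ring
  linarith

end Aux

set_option maxHeartbeats 1000000

/-- Convergence of α-NormEC in the non-private setting (Theorem 1): under
`0 < β ≤ α` and `0 < γ ≤ (βR/(α+R))·(1/L_max)`, where
`R = max_i ‖∇f_i(x⁰) − g_i⁰‖` and `L_max = max_i L_i`, the α-NormEC iterates satisfy
`min_{0≤k≤K} ‖∇f(x^k)‖ ≤ (f(x⁰) − f_inf)/(γ(K+1)) + 2R + (L/2)γ`. -/
theorem alpha_normec_convergence_nonprivate
    (d n : ℕ) (hn : 0 < n)
    (fi : Fin n → EuclideanSpace ℝ (Fin d) → ℝ)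
    (f : EuclideanSpace ℝ (Fin d) → ℝ)
    (hf : ∀ y, f y = (n : ℝ)⁻¹ * ∑ i, fi i y)
    (hdiffi : ∀ i, Differentiable ℝ (fi i))
    (hdiff : Differentiable ℝ f)
    (Li : Fin n → ℝ) (hLipos : ∀ i, 0 < Li i)
    (hlipi : ∀ i x y, ‖gradient (fi i) x - gradient (fi i) y‖ ≤ Li i * ‖x - y‖)
    (L : ℝ) (hL : 0 < L)
    (hlip : ∀ x y, ‖gradient f x - gradient f y‖ ≤ L * ‖x - y‖)
    (finf : ℝ) (hfinf : ∀ y, finf ≤ f y)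
    (α β γ Lmax R : ℝ)
    (hLmax : Lmax = Finset.univ.sup' (Finset.univ_nonempty_iff.mpr ⟨⟨0, hn⟩⟩) Li)
    (x : ℕ → EuclideanSpace ℝ (Fin d))
    (g : Fin n → ℕ → EuclideanSpace ℝ (Fin d))
    (hR : R = Finset.univ.sup' (Finset.univ_nonempty_iff.mpr ⟨⟨0, hn⟩⟩)
      (fun i => ‖gradient (fi i) (x 0) - g i 0‖))
    (hβ : 0 < β) (hβα : β ≤ α)
    (hγ : 0 < γ) (hγle : γ ≤ (β * R / (α + R)) * (1 / Lmax))
    (hg : ∀ i k, g i (k + 1) = g i k +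
      β • ((α + ‖gradient (fi i) (x k) - g i k‖)⁻¹ • (gradient (fi i) (x k) - g i k)))
    (hx : ∀ k, x (k + 1) =
      if (n : ℝ)⁻¹ • ∑ i, g i (k + 1) = 0 then x k
      else x k - γ • ‖(n : ℝ)⁻¹ • ∑ i, g i (k + 1)‖⁻¹ • ((n : ℝ)⁻¹ • ∑ i, g i (k + 1)))
    (K : ℕ) :
    (Finset.range (K + 1)).inf' (Finset.nonempty_range_iff.mpr (Nat.succ_ne_zero K))
        (fun k => ‖gradient f (x k)‖) ≤
      (f (x 0) - finf) / (γ * (K + 1)) + 2 * R + (L / 2) * γ := by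
  have i0 : Fin n := ⟨0, hn⟩
  have hα : 0 < α := lt_of_lt_of_le hβ hβα
  have hR0 : 0 ≤ R := by
    rw [hR]
    exact le_trans (norm_nonneg _)
      (Finset.le_sup' (fun i => ‖gradient (fi i) (x 0) - g i 0‖) (Finset.mem_univ i0))
  have hαR : 0 < α + R := by linarith
  have hLmaxpos : 0 < Lmax := by
    rw [hLmax]
    exact lt_of_lt_of_le (hLipos i0) (Finset.le_sup' _ (Finset.mem_univ i0))
  have hRpos : 0 < R := by
    by_contra h
    push_neg at h
    have hR0' : R = 0 := le_antisymm h hR0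
    rw [hR0'] at hγle
    simp at hγle
    linarith
  have hkey : γ * Lmax ≤ β * R / (α + R) := by
    have h := mul_le_mul_of_nonneg_right hγle hLmaxpos.le
    have heq2 : (β * R / (α + R)) * (1 / Lmax) * Lmax = β * R / (α + R) := by
      field_simp
    linarith
  have hbRα : 0 < β * R / (α + R) := by positivity
  -- step size bound
  have hxstep : ∀ k, ‖x (k + 1) - x k‖ ≤ γ := by
    intro k
    rw [hx k]
    split_ifs with h
    · simpa using hγ.le
    · have hnorm : ‖‖(n : ℝ)⁻¹ • ∑ i, g i (k + 1)‖⁻¹ • ((n : ℝ)⁻¹ • ∑ i, g i (k + 1))‖ = 1 := by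
        rw [norm_smul, norm_inv, norm_norm, inv_mul_cancel₀ (norm_ne_zero_iff.mpr h)]
      rw [sub_sub_cancel_left, norm_neg, norm_smul, hnorm, Real.norm_eq_abs,
        abs_of_nonneg hγ.le, mul_one]
  -- half-step contraction
  have hhalf : ∀ k, (∀ i, ‖gradient (fi i) (x k) - g i k‖ ≤ R) →
      ∀ i, ‖gradient (fi i) (x k) - g i (k + 1)‖ ≤ R - β * R / (α + R) := by
    intro k hk i
    have hki := hk i
    set e := gradient (fi i) (x k) - g i k with he
    have hne : 0 < α + ‖e‖ := by linarith [norm_nonneg e]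
    have heq : gradient (fi i) (x k) - g i (k + 1) = (1 - β * (α + ‖e‖)⁻¹) • e := by
      rw [hg i k, sub_add_eq_sub_sub, ← he, smul_smul, sub_smul, one_smul]
    have hβe : β * (α + ‖e‖)⁻¹ ≤ 1 := by
      have hb : β ≤ α + ‖e‖ := by linarith [norm_nonneg e]
      have h1 := mul_le_mul_of_nonneg_right hb (inv_nonneg.mpr hne.le)
      rw [mul_inv_cancel₀ hne.ne'] at h1
      linarith
    have hc : 0 ≤ 1 - β * (α + ‖e‖)⁻¹ := by linarith
    rw [heq, norm_smul, Real.norm_eq_abs, abs_of_nonneg hc]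
    exact contraction_scalar α β R ‖e‖ hβ hβα (norm_nonneg e) hki
  -- invariant
  have hinv : ∀ k i, ‖gradient (fi i) (x k) - g i k‖ ≤ R := by
    intro k
    induction k with
    | zero =>
      intro i
      rw [hR]
      exact Finset.le_sup' (fun i => ‖gradient (fi i) (x 0) - g i 0‖) (Finset.mem_univ i)
    | succ k ih =>
      intro i
      have h1 : ‖gradient (fi i) (x (k + 1)) - g i (k + 1)‖ ≤
          ‖gradient (fi i) (x (k + 1)) - gradient (fi i) (x k)‖ +
          ‖gradient (fi i) (x k) - g i (k + 1)‖ := by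
        calc ‖gradient (fi i) (x (k + 1)) - g i (k + 1)‖
            = ‖(gradient (fi i) (x (k + 1)) - gradient (fi i) (x k)) +
              (gradient (fi i) (x k) - g i (k + 1))‖ := by rw [sub_add_sub_cancel]
          _ ≤ _ := norm_add_le _ _
      have h2 : ‖gradient (fi i) (x (k + 1)) - gradient (fi i) (x k)‖ ≤ Li i * γ :=
        le_trans (hlipi i _ _) (mul_le_mul_of_nonneg_left (hxstep k) (hLipos i).le)
      have h3 : Li i ≤ Lmax := hLmax ▸ Finset.le_sup' _ (Finset.mem_univ i)
      have h4 : Li i * γ ≤ Lmax * γ := mul_le_mul_of_nonneg_right h3 hγ.le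
      have h5 : Lmax * γ = γ * Lmax := mul_comm _ _
      have h6 := hhalf k ih i
      linarith
  -- gradient decomposition
  have hgradf : ∀ p, gradient f p = (n : ℝ)⁻¹ • ∑ i, gradient (fi i) p :=
    grad_of_avg n fi f hf hdiffi
  -- average bound
  have havg : ∀ k, ‖gradient f (x k) - (n : ℝ)⁻¹ • ∑ i, g i (k + 1)‖ ≤ R := by
    intro k
    have hdecomp : gradient f (x k) - (n : ℝ)⁻¹ • ∑ i, g i (k + 1)
        = (n : ℝ)⁻¹ • ∑ i, (gradient (fi i) (x k) - g i (k + 1)) := by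
      rw [hgradf, ← smul_sub, ← Finset.sum_sub_distrib]
    rw [hdecomp, norm_smul]
    have h1 : ‖∑ i, (gradient (fi i) (x k) - g i (k + 1))‖
        ≤ ∑ _i : Fin n, (R - β * R / (α + R)) :=
      le_trans (norm_sum_le _ _) (Finset.sum_le_sum fun i _ => hhalf k (hinv k) i)
    have h2 : ∑ _i : Fin n, (R - β * R / (α + R)) = (n : ℝ) * (R - β * R / (α + R)) := by
      rw [Finset.sum_const, Finset.card_univ, Fintype.card_fin, nsmul_eq_mul]
    have hn' : (0:ℝ) < n := by exact_mod_cast hn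
    calc ‖(n : ℝ)⁻¹‖ * ‖∑ i, (gradient (fi i) (x k) - g i (k + 1))‖
        ≤ (n : ℝ)⁻¹ * ((n : ℝ) * (R - β * R / (α + R))) := by
          rw [Real.norm_eq_abs, abs_of_nonneg (by positivity)]
          exact mul_le_mul_of_nonneg_left (h1.trans_eq h2) (by positivity)
      _ = R - β * R / (α + R) := by field_simp
      _ ≤ R := by linarith
  -- descent per step
  have hdesc : ∀ k, γ * (‖gradient f (x k)‖ - 2 * R) ≤ f (x k) - f (x (k + 1)) + L / 2 * γ ^ 2 := by
    intro k
    by_cases h : (n : ℝ)⁻¹ • ∑ i, g i (k + 1) = 0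
    · have hx1 : x (k + 1) = x k := by rw [hx k, if_pos h]
      have hgr : ‖gradient f (x k)‖ ≤ R := by
        have h0 := havg k
        rw [h, sub_zero] at h0
        exact h0
      rw [hx1]
      have hsq : 0 ≤ L / 2 * γ ^ 2 := by positivity
      have hmul : 0 ≤ γ * (2 * R - ‖gradient f (x k)‖) :=
        mul_nonneg hγ.le (by linarith)
      nlinarith
    · set w := (n : ℝ)⁻¹ • ∑ i, g i (k + 1) with hwdef
      have hx1 : x (k + 1) = x k - γ • ‖w‖⁻¹ • w := by rw [hx k, if_neg h]
      have hwpos : 0 < ‖w‖ := norm_pos_iff.mpr h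
      have hdlt : ‖gradient f (x k) - w‖ ≤ R := havg k
      have hdescent := my_descent f hdiff L hL.le hlip (x k) (x (k + 1))
      have hst : x (k + 1) - x k = -((γ * ‖w‖⁻¹) • w) := by
        rw [hx1, smul_smul]; abel
      have hip : (inner ℝ (gradient f (x k)) (x (k + 1) - x k) : ℝ)
          ≤ -(γ * (‖gradient f (x k)‖ - 2 * R)) := by
        rw [hst, inner_neg_right, real_inner_smul_right]
        have hIw : ‖w‖ * (‖gradient f (x k)‖ - 2 * R) ≤ (inner ℝ (gradient f (x k)) w : ℝ) := by
          have e1 : (inner ℝ (gradient f (x k)) w : ℝ)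
              = ‖w‖ ^ 2 + inner ℝ (gradient f (x k) - w) w := by
            rw [inner_sub_left, real_inner_self_eq_norm_sq]; ring
          have e2 : |(inner ℝ (gradient f (x k) - w) w : ℝ)|
              ≤ ‖gradient f (x k) - w‖ * ‖w‖ := abs_real_inner_le_norm _ _
          have e3 : ‖gradient f (x k)‖ - ‖w‖ ≤ R := by
            have := norm_sub_norm_le (gradient f (x k)) w
            linarith
          have e4 := abs_le.mp e2
          nlinarith [hwpos, norm_nonneg (gradient f (x k) - w)]
        have hcpos : 0 ≤ γ * ‖w‖⁻¹ := by positivity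
        have hcancel : ‖w‖⁻¹ * ‖w‖ = 1 := inv_mul_cancel₀ hwpos.ne'
        have hmm := mul_le_mul_of_nonneg_left hIw hcpos
        have hx2 : γ * ‖w‖⁻¹ * (‖w‖ * (‖gradient f (x k)‖ - 2 * R))
            = γ * (‖gradient f (x k)‖ - 2 * R) := by
          rw [show γ * ‖w‖⁻¹ * (‖w‖ * (‖gradient f (x k)‖ - 2 * R))
              = γ * ((‖w‖⁻¹ * ‖w‖) * (‖gradient f (x k)‖ - 2 * R)) by ring, hcancel]
          ring
        linarith
      have hnst := hxstep k
      have hsq : ‖x (k + 1) - x k‖ ^ 2 ≤ γ ^ 2 := by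
        nlinarith [norm_nonneg (x (k + 1) - x k)]
      nlinarith [hdescent]
  -- summation
  set m := (Finset.range (K + 1)).inf' (Finset.nonempty_range_iff.mpr (Nat.succ_ne_zero K))
      (fun k => ‖gradient f (x k)‖) with hm
  have hmle : ∀ k ∈ Finset.range (K + 1), m ≤ ‖gradient f (x k)‖ :=
    fun k hk => Finset.inf'_le _ hk
  have h1 : ∀ k ∈ Finset.range (K + 1),
      γ * (m - 2 * R) ≤ (f (x k) - f (x (k + 1))) + L / 2 * γ ^ 2 := by
    intro k hk
    have ha := hdesc k
    have hb := hmle k hk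
    have hc := mul_le_mul_of_nonneg_left (show m - 2 * R ≤ ‖gradient f (x k)‖ - 2 * R by
      linarith) hγ.le
    linarith
  have h2 := Finset.sum_le_sum h1
  rw [Finset.sum_const, Finset.card_range, Finset.sum_add_distrib,
    Finset.sum_range_sub' (fun k => f (x k)), Finset.sum_const, Finset.card_range,
    nsmul_eq_mul, nsmul_eq_mul] at h2
  have h3 : finf ≤ f (x (K + 1)) := hfinf _
  push_cast at h2
  have hden : 0 < γ * ((K : ℝ) + 1) := by positivity
  have h4 : m - 2 * R - L / 2 * γ ≤ (f (x 0) - finf) / (γ * ((K : ℝ) + 1)) := by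
    rw [le_div_iff₀ hden]
    nlinarith [h2, h3]
  have h5 : (f (x 0) - finf) / (γ * ((K : ℝ) + 1)) = (f (x 0) - finf) / (γ * ((K : ℕ) + 1 : ℝ)) := by
    norm_num
  linarith [h4]
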